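/- Let σ > 0 and T > 0. Suppose Θ: [−T, T] → ℝ is twice continuously differentiable with Θ ≥ 0, F: [−T, T] → ℝ is continuous with F ≥ 0, and Θ''(t) ≥ σ²Θ(t) − F(t) for all t ∈ [−T, T]. Then for all t ∈ [−T, T]: Θ(t) ≤ (Θ(T) + Θ(−T))·e^{σ(|t|−T)}/(1 − e^{−4σT}) + (1/(2σ)) ∫_{−T}^{T} e^{−σ|t−s|} F(s) ds. -/

import Mathlib

open Real MeasureTheory Set
open Filter


lemma second_deriv_test {f f' : ℝ → ℝ} {a c : ℝ}
    (hf : ∀ x, HasDerivAt f (f' x) x) (hf' : HasDerivAt f' c a)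
    (hmin : IsLocalMin f a) : 0 ≤ c := by
  by_contra hc
  push_neg at hc
  have hfa : f' a = 0 := hmin.hasDerivAt_eq_zero (hf a)
  have hcont : Continuous f := continuous_iff_continuousAt.mpr fun x => (hf x).continuousAt
  have hslope : Tendsto (slope f' a) (nhdsWithin a {a}ᶜ) (nhds c) :=
    hasDerivAt_iff_tendsto_slope.mp hf'
  have hle : nhdsWithin a (Ioi a) ≤ nhdsWithin a {a}ᶜ :=
    nhdsWithin_mono a (fun x hx => ne_of_gt hx)
  have h2 : ∀ᶠ x in nhdsWithin a (Ioi a), f' x < 0 := by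
    have hev := (hslope.mono_left hle).eventually_lt_const (show c < c/2 by linarith)
    filter_upwards [hev, self_mem_nhdsWithin] with x hx hx'
    have hxa : 0 < x - a := sub_pos.mpr hx'
    rw [slope_def_field, hfa, sub_zero, div_lt_iff₀ hxa] at hx
    nlinarith
  obtain ⟨u, hu, hsub⟩ := mem_nhdsGT_iff_exists_Ioo_subset.mp h2
  obtain ⟨ε, hε, hball⟩ := Metric.eventually_nhds_iff.mp hmin
  set b : ℝ := min u (a + ε) with hb
  have hau : a < u := hu
  have hab : a < b := lt_min hau (by linarith)
  set x₀ : ℝ := (a + b) / 2 with hx₀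
  have hax₀ : a < x₀ := by rw [hx₀]; linarith
  have hx₀b : x₀ < b := by rw [hx₀]; linarith
  have hanti : StrictAntiOn f (Icc a x₀) := by
    apply strictAntiOn_of_deriv_neg (convex_Icc a x₀) hcont.continuousOn
    intro x hx
    rw [interior_Icc] at hx
    rw [(hf x).deriv]
    exact hsub ⟨hx.1, lt_of_lt_of_le (lt_trans hx.2 hx₀b) (min_le_left _ _)⟩
  have h1 : f x₀ < f a := hanti ⟨le_rfl, hax₀.le⟩ ⟨hax₀.le, le_rfl⟩ hax₀
  have h3 : f a ≤ f x₀ := by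
    apply hball
    rw [Real.dist_eq, abs_of_pos (sub_pos.mpr hax₀)]
    have : b ≤ a + ε := min_le_right _ _
    linarith
  linarith


/-- Exponential decay estimate for nonnegative subsolutions of
`Θ'' ≥ σ²Θ − F` on `[−T, T]` (Lemma 4.9). -/
theorem exp_decay_subsolution (σ T : ℝ) (hσ : 0 < σ) (hT : 0 < T)
    (Θ F : ℝ → ℝ)
    (hΘ : ContDiff ℝ 2 Θ) (hF : Continuous F)
    (hΘpos : ∀ t ∈ Icc (-T) T, 0 ≤ Θ t)
    (hFpos : ∀ t ∈ Icc (-T) T, 0 ≤ F t)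
    (hsub : ∀ t ∈ Icc (-T) T, σ ^ 2 * Θ t - F t ≤ deriv (deriv Θ) t) :
    ∀ t ∈ Icc (-T) T,
      Θ t ≤ (Θ T + Θ (-T)) * Real.exp (σ * (|t| - T)) / (1 - Real.exp (-4 * σ * T))
        + (1 / (2 * σ)) * ∫ s in (-T)..T, Real.exp (-σ * |t - s|) * F s := by
  -- basic continuity facts
  have hcA : Continuous (fun s => Real.exp (σ*s) * F s) :=
    (Real.continuous_exp.comp (continuous_const.mul continuous_id)).mul hF
  have hcB : Continuous (fun s => Real.exp (-(σ*s)) * F s) :=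
    (Real.continuous_exp.comp ((continuous_const.mul continuous_id).neg)).mul hF
  -- the particular-solution building blocks
  set A : ℝ → ℝ := fun t => ∫ s in (-T)..t, Real.exp (σ*s) * F s with hAdef
  set B : ℝ → ℝ := fun t => ∫ s in t..T, Real.exp (-(σ*s)) * F s with hBdef
  have hA' : ∀ t, HasDerivAt A (Real.exp (σ*t) * F t) t := by
    intro t
    exact intervalIntegral.integral_hasDerivAt_right
      (hcA.intervalIntegrable _ _) (hcA.stronglyMeasurableAtFilter volume (nhds t)) hcA.continuousAt
  have hB' : ∀ t, HasDerivAt B (-(Real.exp (-(σ*t)) * F t)) t := by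
    intro t
    exact intervalIntegral.integral_hasDerivAt_left
      (hcB.intervalIntegrable _ _) (hcB.stronglyMeasurableAtFilter volume (nhds t)) hcB.continuousAt
  set g : ℝ → ℝ := fun t => Real.exp (-(σ*t)) * A t + Real.exp (σ*t) * B t with hgdef
  set g1 : ℝ → ℝ := fun t => σ * (Real.exp (σ*t) * B t - Real.exp (-(σ*t)) * A t) with hg1def
  have em : ∀ t : ℝ, HasDerivAt (fun t => Real.exp (-(σ*t))) (-σ * Real.exp (-(σ*t))) t := by
    intro t
    have h : HasDerivAt (fun t : ℝ => -(σ*t)) (-σ) t := by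
      have h' := ((hasDerivAt_id t).const_mul σ).neg
      rw [mul_one] at h'; exact h'
    simpa [mul_comm] using h.exp
  have ep : ∀ t : ℝ, HasDerivAt (fun t => Real.exp (σ*t)) (σ * Real.exp (σ*t)) t := by
    intro t
    have h : HasDerivAt (fun t : ℝ => σ*t) σ t := by
      simpa using ((hasDerivAt_id t).const_mul σ)
    simpa [mul_comm] using h.exp
  have hg : ∀ t, HasDerivAt g (g1 t) t := by
    intro t
    have h := ((em t).mul (hA' t)).add ((ep t).mul (hB' t))
    refine h.congr_deriv (Eq.symm ?_)
    simp only [hg1def]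
    ring
  have key : ∀ t : ℝ, Real.exp (σ*t) * Real.exp (-(σ*t)) = 1 := by
    intro t; rw [← Real.exp_add]; simp
  have hg1 : ∀ t, HasDerivAt g1 (σ^2 * g t - 2*σ*F t) t := by
    intro t
    have h := ((((ep t).mul (hB' t)).sub ((em t).mul (hA' t))).const_mul σ)
    refine h.congr_deriv (Eq.symm ?_)
    simp only [hgdef]
    have hk := key t
    linear_combination (2*σ*F t) * hk
  -- identification of the convolution integral with g
  have heq : ∀ t ∈ Icc (-T) T, (∫ s in (-T)..T, Real.exp (-σ * |t - s|) * F s) = g t := by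
    intro t ht
    have hck : Continuous (fun s => Real.exp (-σ * |t - s|) * F s) :=
      (Real.continuous_exp.comp (continuous_const.mul
        ((continuous_const.sub continuous_id).abs))).mul hF
    have hsplit := intervalIntegral.integral_add_adjacent_intervals
      (a := -T) (b := t) (c := T) (μ := volume)
      (hck.intervalIntegrable _ _) (hck.intervalIntegrable _ _)
    rw [← hsplit]
    have p1 : (∫ s in (-T)..t, Real.exp (-σ * |t - s|) * F s)
        = Real.exp (-(σ*t)) * A t := by
      rw [hAdef]
      simp only
      rw [← intervalIntegral.integral_const_mul]
      apply intervalIntegral.integral_congr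
      intro s hs
      rw [uIcc_of_le ht.1] at hs
      have habs : |t - s| = t - s := abs_of_nonneg (by linarith [hs.2])
      have hexp : Real.exp (-σ * |t - s|) = Real.exp (-(σ*t)) * Real.exp (σ*s) := by
        rw [← Real.exp_add]; congr 1; rw [habs]; ring
      show Real.exp (-σ * |t - s|) * F s = Real.exp (-(σ*t)) * (Real.exp (σ*s) * F s)
      rw [hexp, mul_assoc]
    have p2 : (∫ s in t..T, Real.exp (-σ * |t - s|) * F s)
        = Real.exp (σ*t) * B t := by
      rw [hBdef]
      simp only
      rw [← intervalIntegral.integral_const_mul]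
      apply intervalIntegral.integral_congr
      intro s hs
      rw [uIcc_of_le ht.2] at hs
      have habs : |t - s| = s - t := by
        rw [abs_of_nonpos (by linarith [hs.1])]; ring
      have hexp : Real.exp (-σ * |t - s|) = Real.exp (σ*t) * Real.exp (-(σ*s)) := by
        rw [← Real.exp_add]; congr 1; rw [habs]; ring
      show Real.exp (-σ * |t - s|) * F s = Real.exp (σ*t) * (Real.exp (-(σ*s)) * F s)
      rw [hexp, mul_assoc]
    rw [p1, p2]
  -- nonnegativity of g on the interval
  have hg0 : ∀ t ∈ Icc (-T) T, 0 ≤ g t := by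
    intro t ht
    have hA0 : 0 ≤ A t := by
      apply intervalIntegral.integral_nonneg ht.1
      intro u hu
      exact mul_nonneg (Real.exp_pos _).le (hFpos u ⟨hu.1, le_trans hu.2 ht.2⟩)
    have hB0 : 0 ≤ B t := by
      apply intervalIntegral.integral_nonneg ht.2
      intro u hu
      exact mul_nonneg (Real.exp_pos _).le (hFpos u ⟨le_trans ht.1 hu.1, hu.2⟩)
    exact add_nonneg (mul_nonneg (Real.exp_pos _).le hA0)
      (mul_nonneg (Real.exp_pos _).le hB0)
  -- setup comparison function
  have hD : 0 < 1 - Real.exp (-4 * σ * T) := by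
    have : Real.exp (-4 * σ * T) < 1 := by
      rw [Real.exp_lt_one_iff]; nlinarith
    linarith
  have hD1 : 1 - Real.exp (-4 * σ * T) ≤ 1 := by
    have := Real.exp_pos (-4 * σ * T); linarith
  set D : ℝ := 1 - Real.exp (-4 * σ * T) with hDdef
  set P : ℝ → ℝ := fun t => Θ T * Real.exp (σ*(t-T)) + Θ (-T) * Real.exp (-(σ*(t+T))) with hPdef
  set P1 : ℝ → ℝ := fun t => σ * (Θ T * Real.exp (σ*(t-T)) - Θ (-T) * Real.exp (-(σ*(t+T)))) with hP1def
  have e1 : ∀ t : ℝ, HasDerivAt (fun t => Real.exp (σ*(t-T))) (σ * Real.exp (σ*(t-T))) t := by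
    intro t
    have h : HasDerivAt (fun t : ℝ => σ*(t-T)) σ t := by
      simpa using (((hasDerivAt_id t).sub_const T).const_mul σ)
    simpa [mul_comm] using h.exp
  have e2 : ∀ t : ℝ, HasDerivAt (fun t => Real.exp (-(σ*(t+T)))) (-σ * Real.exp (-(σ*(t+T)))) t := by
    intro t
    have h : HasDerivAt (fun t : ℝ => -(σ*(t+T))) (-σ) t := by
      have h' := (((hasDerivAt_id t).add_const T).const_mul σ).neg
      rw [mul_one] at h'; exact h'
    simpa [mul_comm] using h.exp
  have hP : ∀ t, HasDerivAt P (P1 t) t := by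
    intro t
    have h := ((e1 t).const_mul (Θ T)).add ((e2 t).const_mul (Θ (-T)))
    refine h.congr_deriv (Eq.symm ?_)
    simp only [hP1def]; ring
  have hP1 : ∀ t, HasDerivAt P1 (σ^2 * P t) t := by
    intro t
    have h := (((e1 t).const_mul (Θ T)).sub ((e2 t).const_mul (Θ (-T)))).const_mul σ
    refine h.congr_deriv (Eq.symm ?_)
    simp only [hPdef]; ring
  -- the difference function
  set W : ℝ → ℝ := fun t => P t / D + (1/(2*σ)) * g t - Θ t with hWdef
  set W1 : ℝ → ℝ := fun t => P1 t / D + (1/(2*σ)) * g1 t - deriv Θ t with hW1def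
  set W2 : ℝ → ℝ := fun t => σ^2 * P t / D + (1/(2*σ)) * (σ^2 * g t - 2*σ*F t) - deriv (deriv Θ) t with hW2def
  have hΘ1 : ∀ t, HasDerivAt Θ (deriv Θ t) t := by
    intro t
    exact (hΘ.differentiable (by norm_num) t).hasDerivAt
  have hΘ11 : ContDiff ℝ 1 (deriv Θ) := by
    have h2 : ContDiff ℝ ((1:WithTop ℕ∞)+1) Θ := by
      rw [show ((1:WithTop ℕ∞)+1) = 2 from by norm_num]; exact hΘ
    exact (contDiff_succ_iff_deriv.mp h2).2.2
  have hΘ2 : ∀ t, HasDerivAt (deriv Θ) (deriv (deriv Θ) t) t := by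
    intro t
    exact (hΘ11.differentiable (by norm_num) t).hasDerivAt
  have hW : ∀ t, HasDerivAt W (W1 t) t := by
    intro t
    exact (((hP t).div_const D).add ((hg t).const_mul _)).sub (hΘ1 t)
  have hW1 : ∀ t, HasDerivAt W1 (W2 t) t := by
    intro t
    exact (((hP1 t).div_const D).add ((hg1 t).const_mul (1/(2*σ)))).sub (hΘ2 t)
  -- W2 ≤ σ² W on the interval
  have hW2le : ∀ t ∈ Icc (-T) T, W2 t ≤ σ^2 * W t := by
    intro t ht
    have hs := hsub t ht
    have hσne : (2*σ) ≠ 0 := by positivity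
    have key2 : (1/(2*σ)) * (σ^2 * g t - 2*σ*F t) = σ^2 * ((1/(2*σ)) * g t) - F t := by
      field_simp
    simp only [hW2def, hWdef]
    rw [key2]
    have : σ^2 * (P t / D + 1/(2*σ) * g t - Θ t)
        = σ^2 * P t / D + σ^2 * ((1/(2*σ)) * g t) - σ^2 * Θ t := by ring
    rw [this]
    linarith
  -- boundary nonnegativity
  have hΘT0 : 0 ≤ Θ T := hΘpos T ⟨by linarith, le_rfl⟩
  have hΘnT0 : 0 ≤ Θ (-T) := hΘpos (-T) ⟨le_rfl, by linarith⟩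
  have hWT : 0 ≤ W T := by
    have hgT : 0 ≤ g T := hg0 T ⟨by linarith, le_rfl⟩
    have h2 : Θ T ≤ P T / D := by
      rw [le_div_iff₀ hD]
      simp only [hPdef]
      rw [show σ*(T-T) = 0 from by ring, Real.exp_zero]
      nlinarith [mul_nonneg hΘT0 (sub_nonneg.mpr hD1),
        mul_nonneg hΘnT0 (Real.exp_pos (-(σ*(T+T)))).le]
    have h3 : 0 ≤ (1/(2*σ)) * g T := mul_nonneg (by positivity) hgT
    simp only [hWdef]; linarith
  have hWnT : 0 ≤ W (-T) := by
    have hgT : 0 ≤ g (-T) := hg0 (-T) ⟨le_rfl, by linarith⟩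
    have h2 : Θ (-T) ≤ P (-T) / D := by
      rw [le_div_iff₀ hD]
      simp only [hPdef]
      rw [show -(σ*(-T+T)) = 0 from by ring, Real.exp_zero]
      nlinarith [mul_nonneg hΘnT0 (sub_nonneg.mpr hD1),
        mul_nonneg hΘT0 (Real.exp_pos (σ*(-T-T))).le]
    have h3 : 0 ≤ (1/(2*σ)) * g (-T) := mul_nonneg (by positivity) hgT
    simp only [hWdef]; linarith
  -- maximum principle
  have hW0 : ∀ t ∈ Icc (-T) T, 0 ≤ W t := by
    have hK : IsCompact (Icc (-T) T) := isCompact_Icc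
    have hne : (Icc (-T) T).Nonempty := nonempty_Icc.mpr (by linarith)
    have hWc : Continuous W := continuous_iff_continuousAt.mpr fun x => (hW x).continuousAt
    obtain ⟨t₀, ht₀, hmin⟩ := hK.exists_isMinOn hne hWc.continuousOn
    intro t ht
    refine le_trans ?_ (hmin ht)
    by_contra hneg
    push_neg at hneg
    have hTne : t₀ ≠ T := fun h => absurd (h ▸ hneg) (not_lt.mpr hWT)
    have hnTne : t₀ ≠ -T := fun h => absurd (h ▸ hneg) (not_lt.mpr hWnT)
    have hio : t₀ ∈ Ioo (-T) T :=
      ⟨lt_of_le_of_ne ht₀.1 (Ne.symm hnTne), lt_of_le_of_ne ht₀.2 hTne⟩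
    have hloc : IsLocalMin W t₀ := hmin.isLocalMin (Icc_mem_nhds hio.1 hio.2)
    have h0 : 0 ≤ W2 t₀ := second_deriv_test hW (hW1 t₀) hloc
    have h1 : W2 t₀ ≤ σ^2 * W t₀ := hW2le t₀ ht₀
    nlinarith [pow_pos hσ 2]
  -- conclusion
  intro t ht
  have h0 := hW0 t ht
  rw [heq t ht]
  have hPle : P t ≤ (Θ T + Θ (-T)) * Real.exp (σ * (|t| - T)) := by
    have hΘT : 0 ≤ Θ T := hΘpos T ⟨by linarith, le_rfl⟩
    have hΘnT : 0 ≤ Θ (-T) := hΘpos (-T) ⟨le_rfl, by linarith⟩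
    have h1 : Real.exp (σ*(t-T)) ≤ Real.exp (σ * (|t| - T)) := by
      apply Real.exp_le_exp.mpr
      have := le_abs_self t
      nlinarith
    have h2 : Real.exp (-(σ*(t+T))) ≤ Real.exp (σ * (|t| - T)) := by
      apply Real.exp_le_exp.mpr
      have := neg_abs_le t
      nlinarith
    simp only [hPdef]
    calc Θ T * Real.exp (σ*(t-T)) + Θ (-T) * Real.exp (-(σ*(t+T)))
        ≤ Θ T * Real.exp (σ * (|t| - T)) + Θ (-T) * Real.exp (σ * (|t| - T)) := by
          exact add_le_add (mul_le_mul_of_nonneg_left h1 hΘT) (mul_le_mul_of_nonneg_left h2 hΘnT)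
      _ = (Θ T + Θ (-T)) * Real.exp (σ * (|t| - T)) := by ring
  have hdiv : P t / D ≤ (Θ T + Θ (-T)) * Real.exp (σ * (|t| - T)) / D :=
    div_le_div_of_nonneg_right hPle hD.le
  simp only [hWdef] at h0
  linarith
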